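/- Reachability of finite fixed points: for any program P, if Δ ∈ lfp T_P* and Δ is finite, then there is a fact-set step sequence from ∅ to the erasure (Δ)⁻. -/

import Mathlib

open scoped Classical

namespace FCLP

/-! ### Terms -/

/-- Ground (Herbrand) terms: uninterpreted function symbols applied to ground terms. -/
inductive GTerm : Type where
  | func : ℕ → List GTerm → GTerm

/-- Terms possibly containing variables. -/
inductive VTerm : Type where
  | var : ℕ → VTerm
  | func : ℕ → List VTerm → VTerm

/-- A substitution is a total map from variables to ground terms. -/
abbrev Subst := ℕ → GTerm

mutual
  /-- Applying a substitution to a term. -/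
  def VTerm.subst (σ : Subst) : VTerm → GTerm
    | .var x => σ x
    | .func f args => .func f (VTerm.substList σ args)
  def VTerm.substList (σ : Subst) : List VTerm → List GTerm
    | [] => []
    | t :: ts => VTerm.subst σ t :: VTerm.substList σ ts
end

/-- The variable `x` occurs in the term. -/
inductive VTerm.HasVar : VTerm → ℕ → Prop where
  | var (x : ℕ) : VTerm.HasVar (.var x) x
  | func {f : ℕ} {args : List VTerm} {t : VTerm} {x : ℕ} :
      t ∈ args → VTerm.HasVar t x → VTerm.HasVar (.func f args) x

/-! ### Attributes, facts, rules, programs -/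

/-- An attribute `p(t₁,...,tₙ)`: a predicate applied to ground terms. -/
structure Attr where
  pred : ℕ
  args : List GTerm

/-- A fact `p(t̄) is v`. -/
structure Fact where
  attr : Attr
  value : GTerm

/-- A premise `p(t̄) is v`, possibly containing variables. -/
structure VAtom where
  pred : ℕ
  args : List VTerm
  value : VTerm

def VAtom.subst (σ : Subst) (A : VAtom) : Fact :=
  ⟨⟨A.pred, A.args.map (VTerm.subst σ)⟩, A.value.subst σ⟩

def VAtom.HasVar (A : VAtom) (x : ℕ) : Prop :=
  (∃ t ∈ A.args, t.HasVar x) ∨ A.value.HasVar x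

/-- A rule head: open `p(t̄) is? v` or closed `p(t̄) is {v₁,...,vₘ}`. -/
inductive Head : Type where
  | opn : ℕ → List VTerm → VTerm → Head
  | closed : ℕ → List VTerm → List VTerm → Head

def Head.HasVar : Head → ℕ → Prop
  | .opn _ args v, x => (∃ t ∈ args, t.HasVar x) ∨ v.HasVar x
  | .closed _ args vs, x => (∃ t ∈ args, t.HasVar x) ∨ ∃ v ∈ vs, v.HasVar x

/-- The ground attribute of a rule head under a substitution. -/
def Head.groundAttr (σ : Subst) : Head → Attr
  | .opn p args _ => ⟨p, args.map (VTerm.subst σ)⟩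
  | .closed p args _ => ⟨p, args.map (VTerm.subst σ)⟩

/-- A rule `H ← F` with a finite collection of premises. -/
structure Rule where
  head : Head
  prems : List VAtom

/-- Wellformedness: closed heads offer at least one value, and every
variable in the head occurs in a premise. -/
def Rule.WF (r : Rule) : Prop :=
  (∀ x, r.head.HasVar x → ∃ A ∈ r.prems, A.HasVar x) ∧
  (∀ p args vs, r.head = .closed p args vs → vs ≠ [])

/-- A program is a set of rules. -/
abbrev Program := Set Rule

/-- A program is a *finite* set of *wellformed* rules. -/
def Program.WFP (P : Program) : Prop := P.Finite ∧ ∀ r ∈ P, r.WF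

/-! ### Fact-set semantics -/

/-- A set of facts is consistent when each attribute has at most one value. -/
def Consistent (D : Set Fact) : Prop :=
  ∀ f ∈ D, ∀ g ∈ D, f.attr = g.attr → f = g

/-- `σ` satisfies the premises `F` in the fact-set database `D`. -/
def satF (σ : Subst) (F : List VAtom) (D : Set Fact) : Prop :=
  ∀ A ∈ F, A.subst σ ∈ D

/-- Fact-set evolution `D →_P S`. -/
inductive Evolve (P : Program) : Set Fact → Set (Set Fact) → Prop where
  | triv (D : Set Fact) : Evolve P D {D}
  | closed {D : Set Fact} {r : Rule} {p : ℕ} {args vs : List VTerm} {σ : Subst} :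
      r ∈ P → r.head = .closed p args vs → satF σ r.prems D →
      Evolve P D
        { E | ∃ v ∈ vs,
            E = insert (⟨⟨p, args.map (VTerm.subst σ)⟩, VTerm.subst σ v⟩ : Fact) D ∧
            Consistent E }
  | opn {D : Set Fact} {r : Rule} {p : ℕ} {args : List VTerm} {v : VTerm} {σ : Subst} :
      r ∈ P → r.head = .opn p args v → satF σ r.prems D →
      Evolve P D
        ({D} ∪ { E | E = insert (⟨⟨p, args.map (VTerm.subst σ)⟩, VTerm.subst σ v⟩ : Fact) D ∧
                     Consistent E })

/-- `P` allows `D` to step to `D'`. -/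
def Step (P : Program) (D D' : Set Fact) : Prop := ∃ S, Evolve P D S ∧ D' ∈ S

/-- A database is saturated when its only evolution is the singleton of itself. -/
def Saturated (P : Program) (D : Set Fact) : Prop := ∀ S, Evolve P D S → S = {D}

/-- A solution: a saturated database reachable from `∅` by a (finite) step sequence. -/
def Solution (P : Program) (D : Set Fact) : Prop :=
  Relation.ReflTransGen (Step P) ∅ D ∧ Saturated P D

/-! ### Constraints and constraint databases -/

/-- A constraint: `just t` or `noneOf X`. -/
inductive Constraint : Type where
  | just : GTerm → Constraint
  | noneOf : Set GTerm → Constraint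

/-- The order on constraints. -/
def Constraint.le : Constraint → Constraint → Prop
  | .noneOf X, .noneOf Y => X ⊆ Y
  | .noneOf X, .just t => t ∉ X
  | .just t, .just t' => t = t'
  | .just _, .noneOf _ => False

instance : LE Constraint := ⟨Constraint.le⟩

/-- Least upper bound of a (compatible) set of constraints: if some `just t` is present
it is the lub; otherwise it is `noneOf` of the union. -/
noncomputable def Constraint.lub (C : Set Constraint) : Constraint :=
  if h : ∃ t, Constraint.just t ∈ C then .just h.choose
  else .noneOf (⋃₀ { X | Constraint.noneOf X ∈ C })

/-- A constraint database: a map from ground attributes to constraints,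
ordered pointwise (via the `Pi` order). -/
abbrev CDB := Attr → Constraint

/-- The least constraint database: every attribute maps to `noneOf ∅`. -/
def cdbBot : CDB := fun _ => .noneOf ∅

/-- Pointwise least upper bound of a (compatible) set of constraint databases. -/
noncomputable def CDB.lub (S : Set CDB) : CDB :=
  fun a => Constraint.lub ((fun Δ => Δ a) '' S)

/-- A subset of a poset is compatible when it has an upper bound. -/
def Compatible {α : Type*} [LE α] (X : Set α) : Prop := ∃ y, ∀ x ∈ X, x ≤ y

/-- Binary compatibility. -/
def Compat {α : Type*} [LE α] (x y : α) : Prop := Compatible ({x, y} : Set α)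

/-- A choice set: a pairwise-incompatible set of constraint databases. -/
def IsChoiceSet (𝒞 : Set CDB) : Prop :=
  ∀ D ∈ 𝒞, ∀ E ∈ 𝒞, Compat D E → D = E

/-- The order on choice sets. -/
def ChoiceLE (𝒞₁ 𝒞₂ : Set CDB) : Prop :=
  ∀ D₂ ∈ 𝒞₂, ∃ D₁ ∈ 𝒞₁, D₁ ≤ D₂

/-- Least upper bound of an indexed family of choice sets:
`⋁ᵢ 𝒞ᵢ = { ⋁ Im(f) : f ∈ ∏ᵢ 𝒞ᵢ, Im(f) compatible }`. -/
noncomputable def ChoiceJoin {I : Type*} (𝒞 : I → Set CDB) : Set CDB :=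
  { E | ∃ f : I → CDB, (∀ i, f i ∈ 𝒞 i) ∧ Compatible (Set.range f) ∧
        E = CDB.lub (Set.range f) }

/-- Least upper bound of a set of choice sets. -/
noncomputable def ChoiceSJoin (S : Set (Set CDB)) : Set CDB :=
  ChoiceJoin (fun C : S => (C : Set CDB))

/-- Greatest lower bound of a set of choice sets:
`⋀ X = ⋁ {𝒞 : ∀ x ∈ X, 𝒞 ≤ x}` (join over choice-set lower bounds). -/
noncomputable def ChoiceMeet (S : Set (Set CDB)) : Set CDB :=
  ChoiceSJoin { C | IsChoiceSet C ∧ ∀ X ∈ S, ChoiceLE C X }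

/-! ### Immediate consequence -/

/-- `σ` satisfies `F` in the constraint database `Δ`. -/
def satC (σ : Subst) (F : List VAtom) (Δ : CDB) : Prop :=
  ∀ A ∈ F, Constraint.just (A.value.subst σ) ≤ Δ ⟨A.pred, A.args.map (VTerm.subst σ)⟩

/-- The constraint database mapping `a` to `c` and every other attribute to `noneOf ∅`. -/
noncomputable def unitCDB (a : Attr) (c : Constraint) : CDB :=
  fun a' => if a' = a then c else .noneOf ∅

/-- The choice set `⟨σH⟩` determined by a ground rule head. -/
noncomputable def headChoice (σ : Subst) : Head → Set CDB
  | .opn p args v =>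
      { unitCDB ⟨p, args.map (VTerm.subst σ)⟩ (.just (v.subst σ)),
        unitCDB ⟨p, args.map (VTerm.subst σ)⟩ (.noneOf {v.subst σ}) }
  | .closed p args vs =>
      { Δ | ∃ v ∈ vs, Δ = unitCDB ⟨p, args.map (VTerm.subst σ)⟩ (.just (v.subst σ)) }

/-- The immediate consequence operator
`T_P(Δ) = {Δ} ∨ ⋁{ ⟨σH⟩ : (H ← F) ∈ P, σ satisfies F in Δ }`. -/
noncomputable def TP (P : Program) (Δ : CDB) : Set CDB :=
  ChoiceSJoin
    (insert {Δ} { C | ∃ r ∈ P, ∃ σ : Subst, satC σ r.prems Δ ∧ C = headChoice σ r.head })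

/-- The attribute-specific immediate consequence operator `T_{P[a]}`. -/
noncomputable def TPa (P : Program) (a : Attr) (Δ : CDB) : Set CDB :=
  ChoiceSJoin
    { C | ∃ r ∈ P, ∃ σ : Subst, satC σ r.prems Δ ∧ r.head.groundAttr σ = a ∧
          C = headChoice σ r.head }

/-- The lifted immediate consequence operator `T_P*(𝒞) = ⋃_{Δ ∈ 𝒞} T_P(Δ)`. -/
noncomputable def TPs (P : Program) (𝒞 : Set CDB) : Set CDB :=
  { E | ∃ Δ ∈ 𝒞, E ∈ TP P Δ }

/-- The least fixed point of `T_P*`, defined à la Knaster–Tarski as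
`⋀ {𝒞 : T_P*(𝒞) ≤ 𝒞}`. -/
noncomputable def lfpTPs (P : Program) : Set CDB :=
  ChoiceMeet { C | IsChoiceSet C ∧ ChoiceLE (TPs P C) C }

/-! ### Positive and finite constraint databases, promotion and erasure -/

/-- A constraint database is positive when `noneOf X` only occurs with `X = ∅`. -/
def CDBPositive (Δ : CDB) : Prop := ∀ a X, Δ a = .noneOf X → X = ∅

/-- A constraint database is finite. -/
def CDBFinite (Δ : CDB) : Prop :=
  { a | Δ a ≠ .noneOf ∅ }.Finite ∧ ∀ a X, Δ a = .noneOf X → X.Finite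

/-- Promotion of a (consistent) fact set to a constraint database. -/
noncomputable def promote (D : Set Fact) : CDB :=
  fun a => if h : ∃ v, (⟨a, v⟩ : Fact) ∈ D then .just h.choose else .noneOf ∅

/-- Erasure of a constraint database to a fact set. -/
def eraseCDB (Δ : CDB) : Set Fact := { f | Δ f.attr = .just f.value }

/-! ### The abstract algorithm -/

/-- `P` allows `Δ` to take an algorithmic step to any `Δ' ∈ {Δ} ∨ T_{P[a]}(Δ)`
for some attribute `a`, provided `T_P(Δ) ≠ ∅`. -/
noncomputable def AlgStep (P : Program) (Δ Δ' : CDB) : Prop :=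
  TP P Δ ≠ ∅ ∧ ∃ a : Attr, Δ' ∈ ChoiceSJoin {({Δ} : Set CDB), TPa P a Δ}

/-! ### Datalog -/

/-- A datalog atom, possibly with variables. -/
structure DAtom where
  pred : ℕ
  args : List VTerm

/-- A ground datalog atom. -/
structure GAtom where
  pred : ℕ
  args : List GTerm

def DAtom.subst (σ : Subst) (A : DAtom) : GAtom := ⟨A.pred, A.args.map (VTerm.subst σ)⟩

/-- A datalog rule `p(t̄) ← p₁(t̄₁), ..., pₙ(t̄ₙ)`. -/
structure DRule where
  head : DAtom
  prems : List DAtom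

/-- Every variable of the head appears in a premise. -/
def DRule.WF (r : DRule) : Prop :=
  ∀ x, (∃ t ∈ r.head.args, t.HasVar x) → ∃ A ∈ r.prems, ∃ t ∈ A.args, t.HasVar x

/-- The datalog immediate consequence operator. -/
def dImmCons (P : Set DRule) (X : Set GAtom) : Set GAtom :=
  { g | ∃ r ∈ P, ∃ σ : Subst, (∀ A ∈ r.prems, A.subst σ ∈ X) ∧ g = r.head.subst σ }

/-- The least model of a datalog program: the least fixed point of `dImmCons`. -/
def dModel (P : Set DRule) : Set GAtom := ⋂₀ { X | dImmCons P X ⊆ X }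

/-- Translation of a datalog program to a finite-choice logic program, using the
constant with (fresh) function symbol `u` as the value `unit`. -/
def trDatalog (u : ℕ) (P : Set DRule) : Program :=
  { r | ∃ dr ∈ P,
      r = ⟨Head.closed dr.head.pred dr.head.args [VTerm.func u []],
           dr.prems.map (fun A => ⟨A.pred, A.args, VTerm.func u []⟩)⟩ }

/-! ### Answer set programming -/

/-- A ground ASP rule `p ← p₁,...,pₙ, ¬q₁,...,¬qₘ` over propositional atoms. -/
structure ASPRule where
  head : ℕ
  pos : List ℕ
  neg : List ℕ

/-- One step of the immediate consequence operator of the reduct `P^X`. -/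
def reductCons (P : Set ASPRule) (X : Set ℕ) (Y : Set ℕ) : Set ℕ :=
  { p | ∃ r ∈ P, r.head = p ∧ (∀ q ∈ r.pos, q ∈ Y) ∧ (∀ q ∈ r.neg, q ∉ X) }

/-- The least model of the reduct `P^X`. -/
def reductModel (P : Set ASPRule) (X : Set ℕ) : Set ℕ :=
  ⋂₀ { Y | reductCons P X Y ⊆ Y }

/-- `X` is a stable model of `P` when the least model of the reduct `P^X` equals `X`. -/
def StableModel (P : Set ASPRule) (X : Set ℕ) : Prop := reductModel P X = X

/-- The fresh constant `tt` (as a ground term). -/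
def ttT : GTerm := .func 0 []
/-- The fresh constant `ff` (as a ground term). -/
def ffT : GTerm := .func 1 []
/-- The constant `tt` as a (closed) term of the rule language. -/
def ttV : VTerm := .func 0 []
/-- The constant `ff` as a (closed) term of the rule language. -/
def ffV : VTerm := .func 1 []

/-- The premise `p is tt`. -/
def posPrem (p : ℕ) : VAtom := ⟨p, [], ttV⟩
/-- The premise `q is ff`. -/
def negPrem (q : ℕ) : VAtom := ⟨q, [], ffV⟩

/-- Translation of an ASP program to a finite-choice logic program: each rule
`p ← p₁,...,pₙ, ¬q₁,...,¬qₘ` becomes `m` open rules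
`qⱼ is? ff ← p₁ is tt,...,pₙ is tt, q₁ is ff,...,q_{j-1} is ff` and one closed rule
`p is {tt} ← p₁ is tt,...,pₙ is tt, q₁ is ff,...,qₘ is ff`. -/
def trASP (P : Set ASPRule) : Program :=
  { r | ∃ ar ∈ P,
      (∃ j : Fin ar.neg.length,
        r = ⟨Head.opn (ar.neg.get j) [] ffV,
             ar.pos.map posPrem ++ (ar.neg.take j.val).map negPrem⟩) ∨
      r = ⟨Head.closed ar.head [] [ttV],
           ar.pos.map posPrem ++ ar.neg.map negPrem⟩ }

section Reachability

open Set

lemma cle_cases (c : Constraint) : (∃ t, c = .just t) ∨ ∃ X, c = .noneOf X := by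
  cases c with
  | just t => exact Or.inl ⟨t, rfl⟩
  | noneOf X => exact Or.inr ⟨X, rfl⟩

lemma cle_refl (c : Constraint) : c ≤ c := by
  cases c with
  | just t => exact rfl
  | noneOf X => exact fun _ h => h

lemma cle_trans {a b c : Constraint} (h1 : a ≤ b) (h2 : b ≤ c) : a ≤ c := by
  cases a <;> cases b <;> cases c <;>
    simp only [LE.le, Constraint.le] at * <;>
    first
      | exact h1.trans h2
      | exact h1 ▸ h2
      | exact h2 ▸ h1
      | exact fun h => h2 (h1 h)
      | exact h1
      | exact h2
      | exact fun x hx => h2 (h1 hx)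

lemma just_le {t : GTerm} {c : Constraint} (h : Constraint.just t ≤ c) : c = .just t := by
  cases c with
  | just t' => exact congrArg _ (id (h : t = t')).symm
  | noneOf X => exact absurd h id

lemma cle_antisymm {a b : Constraint} (h1 : a ≤ b) (h2 : b ≤ a) : a = b := by
  cases a with
  | just t => exact (just_le h1).symm
  | noneOf X =>
    cases b with
    | just t => exact absurd h2 id
    | noneOf Y => exact congrArg _ (subset_antisymm h1 h2)

lemma cbot_le (c : Constraint) : Constraint.noneOf ∅ ≤ c := by
  cases c with
  | just t => exact fun h => h.elim
  | noneOf X => exact Set.empty_subset X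

lemma cdb_le_def {d e : CDB} : d ≤ e ↔ ∀ a, d a ≤ e a := Iff.rfl

lemma cdb_le_refl (d : CDB) : d ≤ d := fun a => cle_refl _
lemma cdb_le_trans {d e f : CDB} (h1 : d ≤ e) (h2 : e ≤ f) : d ≤ f :=
  fun a => cle_trans (h1 a) (h2 a)
lemma cdb_le_antisymm {d e : CDB} (h1 : d ≤ e) (h2 : e ≤ d) : d = e :=
  funext fun a => cle_antisymm (h1 a) (h2 a)

lemma cdbBot_le (d : CDB) : cdbBot ≤ d := fun a => cbot_le _

/-- lub is below any upper bound. -/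
lemma club_le {S : Set Constraint} {u : Constraint} (h : ∀ c ∈ S, c ≤ u) :
    Constraint.lub S ≤ u := by
  unfold Constraint.lub
  split_ifs with hj
  · exact h _ hj.choose_spec
  · cases u with
    | just s =>
      intro hs
      obtain ⟨X, hX, hsX⟩ := hs
      exact (h _ hX) hsX
    | noneOf Y =>
      intro x hx
      obtain ⟨X, hX, hxX⟩ := hx
      exact (h _ hX) hxX

/-- Under a common upper bound, lub is an upper bound. -/
lemma club_ub {S : Set Constraint} (hc : ∃ u, ∀ c ∈ S, c ≤ u) :
    ∀ c ∈ S, c ≤ Constraint.lub S := by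
  obtain ⟨u, hu⟩ := hc
  intro c hcS
  unfold Constraint.lub
  split_ifs with hj
  · have h1 : u = .just hj.choose := just_le (hu _ hj.choose_spec)
    have h2 : c ≤ .just hj.choose := h1 ▸ hu _ hcS
    exact h2
  · cases c with
    | just t => exact absurd ⟨t, hcS⟩ hj
    | noneOf X => exact Set.subset_sUnion_of_mem hcS

lemma club_just {S : Set Constraint} {t : GTerm} (h : Constraint.lub S = .just t) :
    Constraint.just t ∈ S := by
  unfold Constraint.lub at h
  split_ifs at h with hj
  · cases h; exact hj.choose_spec

lemma cdb_lub_le {S : Set CDB} {u : CDB} (h : ∀ d ∈ S, d ≤ u) : CDB.lub S ≤ u := by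
  intro a
  refine club_le ?_
  rintro c ⟨d, hd, rfl⟩
  exact h d hd a

lemma cdb_lub_ub {S : Set CDB} (hc : Compatible S) : ∀ d ∈ S, d ≤ CDB.lub S := by
  obtain ⟨u, hu⟩ := hc
  intro d hd a
  refine club_ub ⟨u a, ?_⟩ _ ⟨d, hd, rfl⟩
  intro c hc
  obtain ⟨e, he, rfl⟩ := hc
  exact hu e he a

lemma cdb_lub_just {S : Set CDB} {a : Attr} {t : GTerm} (h : CDB.lub S a = .just t) :
    ∃ d ∈ S, d a = .just t := by
  obtain ⟨d, hd, hda⟩ := club_just h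
  exact ⟨d, hd, hda⟩

end Reachability
lemma compatible_def {α : Type*} [LE α] {X : Set α} :
    Compatible X ↔ ∃ y, ∀ x ∈ X, x ≤ y := Iff.rfl

/-- The indexing set of choice sets joined by `TP`. -/
def HS (P : Program) (Δ : CDB) : Set (Set CDB) :=
  insert {Δ} { C | ∃ r ∈ P, ∃ σ : Subst, satC σ r.prems Δ ∧ C = headChoice σ r.head }

lemma mem_TP_iff {P : Program} {Δ E : CDB} :
    E ∈ TP P Δ ↔ ∃ f : HS P Δ → CDB, (∀ i : HS P Δ, f i ∈ i.1) ∧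
      Compatible (Set.range f) ∧ E = CDB.lub (Set.range f) := Iff.rfl

lemma mem_TP_le {P : Program} {Δ E : CDB} (h : E ∈ TP P Δ) : Δ ≤ E := by
  obtain ⟨f, hf, hcomp, rfl⟩ := h
  have h0 : f ⟨{Δ}, Set.mem_insert _ _⟩ = Δ := hf ⟨{Δ}, Set.mem_insert _ _⟩
  have h1 := cdb_lub_ub hcomp _ ⟨⟨{Δ}, Set.mem_insert _ _⟩, rfl⟩
  rwa [h0] at h1

lemma mem_TP_self {P : Program} {Δ : CDB} (h : ∀ C ∈ HS P Δ, ∃ p ∈ C, p ≤ Δ) :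
    Δ ∈ TP P Δ := by
  refine mem_TP_iff.2
    ⟨fun i => (h i i.2).choose, fun i => (h i i.2).choose_spec.1, compatible_def.2 ⟨Δ, ?_⟩, ?_⟩
  · rintro x ⟨i, rfl⟩
    exact (h i i.2).choose_spec.2
  · have hub : ∀ x ∈ Set.range (fun i : HS P Δ => (h i i.2).choose), x ≤ Δ := by
      rintro x ⟨i, rfl⟩
      exact (h i i.2).choose_spec.2
    refine cdb_le_antisymm ?_ (cdb_lub_le hub)
    have hmem : (h {Δ} (Set.mem_insert _ _)).choose = Δ :=
      (h {Δ} (Set.mem_insert _ _)).choose_spec.1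
    have h1 := cdb_lub_ub (compatible_def.2 ⟨Δ, hub⟩) _ ⟨⟨{Δ}, Set.mem_insert _ _⟩, rfl⟩
    simp only [] at h1
    rwa [hmem] at h1

lemma unitCDB_self (a : Attr) (c : Constraint) : unitCDB a c a = c := if_pos rfl
lemma unitCDB_ne {a a' : Attr} (h : a' ≠ a) (c : Constraint) :
    unitCDB a c a' = .noneOf ∅ := if_neg h

lemma TP_unique {P : Program} {Δ E1 E2 : CDB} (h1 : E1 ∈ TP P Δ) (h2 : E2 ∈ TP P Δ)
    (hc : Compat E1 E2) : E1 = E2 := by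
  obtain ⟨f1, hf1, hcomp1, rfl⟩ := mem_TP_iff.1 h1
  obtain ⟨f2, hf2, hcomp2, rfl⟩ := mem_TP_iff.1 h2
  obtain ⟨u, hu⟩ := hc
  have hu1 : CDB.lub (Set.range f1) ≤ u := hu _ (Set.mem_insert _ _)
  have hu2 : CDB.lub (Set.range f2) ≤ u := hu _ (Set.mem_insert_of_mem _ rfl)
  have hle1 : ∀ i, f1 i ≤ u := fun i => cdb_le_trans (cdb_lub_ub hcomp1 _ ⟨i, rfl⟩) hu1
  have hle2 : ∀ i, f2 i ≤ u := fun i => cdb_le_trans (cdb_lub_ub hcomp2 _ ⟨i, rfl⟩) hu2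
  have key : f1 = f2 := by
    funext i
    rcases Set.mem_insert_iff.1 i.2 with hmem | hmem
    · have e1 : f1 i ∈ ({Δ} : Set CDB) := hmem ▸ hf1 i
      have e2 : f2 i ∈ ({Δ} : Set CDB) := hmem ▸ hf2 i
      rw [e1, e2]
    · obtain ⟨r, hr, σ, hsat, hEq⟩ := hmem
      cases hh : r.head with
      | opn p args v =>
        rw [hh] at hEq
        have m1 : f1 i ∈ headChoice σ (.opn p args v) := hEq ▸ hf1 i
        have m2 : f2 i ∈ headChoice σ (.opn p args v) := hEq ▸ hf2 i
        set A : Attr := ⟨p, args.map (VTerm.subst σ)⟩ with hA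
        set w : GTerm := v.subst σ with hw
        have contra : ∀ g1 g2 : CDB, g1 = unitCDB A (.just w) →
            g2 = unitCDB A (.noneOf {w}) → g1 A ≤ u A → g2 A ≤ u A → False := by
          intro g1 g2 e1 e2 l1 l2
          rw [e1, unitCDB_self] at l1
          rw [e2, unitCDB_self] at l2
          rw [just_le l1] at l2
          exact l2 rfl
        rcases Set.mem_insert_iff.1 m1 with e1 | e1 <;>
          rcases Set.mem_insert_iff.1 m2 with e2 | e2
        · rw [e1, Set.mem_singleton_iff.1 e2]
        · exact absurd (contra _ _ e1 (Set.mem_singleton_iff.1 e2) (hle1 i A) (hle2 i A)) not_false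
        · exact absurd (contra _ _ e2 (Set.mem_singleton_iff.1 e1) (hle2 i A) (hle1 i A)) not_false
        · rw [Set.mem_singleton_iff.1 e1, Set.mem_singleton_iff.1 e2]
      | closed p args vs =>
        rw [hh] at hEq
        have m1 : f1 i ∈ headChoice σ (.closed p args vs) := hEq ▸ hf1 i
        have m2 : f2 i ∈ headChoice σ (.closed p args vs) := hEq ▸ hf2 i
        obtain ⟨v1, hv1, e1⟩ := m1
        obtain ⟨v2, hv2, e2⟩ := m2
        set A : Attr := ⟨p, args.map (VTerm.subst σ)⟩ with hA
        have l1 : f1 i A ≤ u A := hle1 i A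
        have l2 : f2 i A ≤ u A := hle2 i A
        rw [e1, unitCDB_self] at l1
        rw [e2, unitCDB_self] at l2
        rw [just_le l1] at l2
        have : v2.subst σ = v1.subst σ := l2
        rw [e1, e2, this]
  rw [key]

lemma satC_mono {σ : Subst} {F : List VAtom} {Δ1 Δ2 : CDB} (h : satC σ F Δ1)
    (hle : Δ1 ≤ Δ2) : satC σ F Δ2 :=
  fun A hA => cle_trans (h A hA) (hle _)

lemma TP_mono {P : Program} {Δ1 Δ2 E2 : CDB} (hle : Δ1 ≤ Δ2) (h2 : E2 ∈ TP P Δ2) :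
    ∃ E1 ∈ TP P Δ1, E1 ≤ E2 := by
  obtain ⟨f2, hf2, hcomp2, rfl⟩ := mem_TP_iff.1 h2
  have hΔ2 : Δ2 ≤ CDB.lub (Set.range f2) := by
    have h0 : f2 ⟨{Δ2}, Set.mem_insert _ _⟩ = Δ2 := hf2 ⟨{Δ2}, Set.mem_insert _ _⟩
    have h1 := cdb_lub_ub hcomp2 _ ⟨⟨{Δ2}, Set.mem_insert _ _⟩, rfl⟩
    rwa [h0] at h1
  have key : ∀ C ∈ HS P Δ1, ∃ p ∈ C, p ≤ CDB.lub (Set.range f2) := by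
    intro C hC
    rcases Set.mem_insert_iff.1 hC with h | h
    · exact ⟨Δ1, h ▸ rfl, cdb_le_trans hle hΔ2⟩
    · obtain ⟨r, hr, σ, hsat, rfl⟩ := h
      have hC2 : headChoice σ r.head ∈ HS P Δ2 :=
        Set.mem_insert_of_mem _ ⟨r, hr, σ, satC_mono hsat hle, rfl⟩
      exact ⟨f2 ⟨_, hC2⟩, hf2 ⟨_, hC2⟩, cdb_lub_ub hcomp2 _ ⟨_, rfl⟩⟩
  have hub : ∀ x ∈ Set.range (fun i : HS P Δ1 => (key i i.2).choose),
      x ≤ CDB.lub (Set.range f2) := by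
    rintro x ⟨i, rfl⟩
    exact (key i i.2).choose_spec.2
  refine ⟨_, mem_TP_iff.2 ⟨fun i => (key i i.2).choose,
    fun i => (key i i.2).choose_spec.1, compatible_def.2 ⟨_, hub⟩, rfl⟩, cdb_lub_le hub⟩
lemma compat_of_le {u x y : CDB} (hx : x ≤ u) (hy : y ≤ u) : Compat x y := by
  refine compatible_def.2 ⟨u, ?_⟩
  intro z hz
  rcases Set.mem_insert_iff.1 hz with rfl | hz
  · exact hx
  · rw [Set.mem_singleton_iff.1 hz]; exact hy

lemma compat_ub {x y : CDB} (h : Compat x y) : ∃ u, x ≤ u ∧ y ≤ u := by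
  obtain ⟨u, hu⟩ := compatible_def.1 h
  exact ⟨u, hu _ (Set.mem_insert _ _), hu _ (Set.mem_insert_of_mem _ rfl)⟩

lemma mem_TPs_iff {P : Program} {C : Set CDB} {E : CDB} :
    E ∈ TPs P C ↔ ∃ Δ ∈ C, E ∈ TP P Δ := Iff.rfl

lemma TPs_choice {P : Program} {C : Set CDB} (hC : IsChoiceSet C) :
    IsChoiceSet (TPs P C) := by
  intro D hD E hE hcompat
  obtain ⟨Δd, hΔd, hDd⟩ := mem_TPs_iff.1 hD
  obtain ⟨Δe, hΔe, hDe⟩ := mem_TPs_iff.1 hE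
  obtain ⟨u, hDu, hEu⟩ := compat_ub hcompat
  have h1 : Δd ≤ u := cdb_le_trans (mem_TP_le hDd) hDu
  have h2 : Δe ≤ u := cdb_le_trans (mem_TP_le hDe) hEu
  have hde : Δd = Δe := hC _ hΔd _ hΔe (compat_of_le h1 h2)
  subst hde
  exact TP_unique hDd hDe (compat_of_le hDu hEu)

lemma TPs_mono {P : Program} {C1 C2 : Set CDB} (h : ChoiceLE C1 C2) :
    ChoiceLE (TPs P C1) (TPs P C2) := by
  intro D2 hD2
  obtain ⟨Δ2, hΔ2, hD⟩ := mem_TPs_iff.1 hD2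
  obtain ⟨Δ1, hΔ1, hle⟩ := h Δ2 hΔ2
  obtain ⟨E1, hE1, hE1le⟩ := TP_mono hle hD
  exact ⟨E1, mem_TPs_iff.2 ⟨Δ1, hΔ1, hE1⟩, hE1le⟩

/-- Finite iterates of `TPs` starting at the bottom choice set. -/
def It (P : Program) : ℕ → Set CDB := fun n => (TPs P)^[n] {cdbBot}

lemma It_zero {P : Program} : It P 0 = {cdbBot} := rfl
lemma It_succ {P : Program} (n : ℕ) : It P (n + 1) = TPs P (It P n) :=
  Function.iterate_succ_apply' _ _ _

lemma It_choice {P : Program} : ∀ n, IsChoiceSet (It P n) := by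
  intro n
  induction n with
  | zero =>
    intro D hD E hE _
    rw [Set.mem_singleton_iff.1 hD, Set.mem_singleton_iff.1 hE]
  | succ n ih =>
    rw [It_succ]
    exact TPs_choice ih

lemma It_lb {P : Program} {X : Set CDB} (h2 : ChoiceLE (TPs P X) X) :
    ∀ n, ChoiceLE (It P n) X := by
  intro n
  induction n with
  | zero =>
    intro D hD
    exact ⟨cdbBot, rfl, cdbBot_le D⟩
  | succ n ih =>
    rw [It_succ]
    intro D2 hD2
    obtain ⟨D1, hD1, hle1⟩ := h2 D2 hD2
    obtain ⟨D0, hD0, hle0⟩ := TPs_mono ih D1 hD1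
    exact ⟨D0, hD0, cdb_le_trans hle0 hle1⟩

lemma chain_step {P : Program} {e : ℕ → CDB} {u : CDB} (he : ∀ n, e n ∈ It P n)
    (hu : ∀ n, e n ≤ u) : ∀ n, e (n + 1) ∈ TP P (e n) := by
  intro n
  have h1 : e (n + 1) ∈ TPs P (It P n) := by rw [← It_succ]; exact he (n + 1)
  obtain ⟨Δ', hΔ', hmem⟩ := mem_TPs_iff.1 h1
  have heq : Δ' = e n :=
    It_choice n _ hΔ' _ (he n)
      (compat_of_le (cdb_le_trans (mem_TP_le hmem) (hu (n + 1))) (hu n))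
  exact heq ▸ hmem

lemma chain_mono {e : ℕ → CDB} (h : ∀ n, e n ≤ e (n + 1)) :
    ∀ m n, m ≤ n → e m ≤ e n := by
  intro m n hmn
  induction hmn with
  | refl => exact cdb_le_refl _
  | step _ ih => exact cdb_le_trans ih (h _)

lemma sat_stage {e : ℕ → CDB} (hmono : ∀ m n, m ≤ n → e m ≤ e n)
    (hjust : ∀ a t, CDB.lub (Set.range e) a = .just t → ∃ n, e n a = .just t) :
    ∀ (F : List VAtom) (σ : Subst), satC σ F (CDB.lub (Set.range e)) →
      ∃ N, satC σ F (e N) := by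
  intro F
  induction F with
  | nil => exact fun σ _ => ⟨0, fun A hA => absurd hA List.not_mem_nil⟩
  | cons A F ih =>
    intro σ hsat
    obtain ⟨N1, hN1⟩ := ih σ (fun B hB => hsat B (List.mem_cons_of_mem _ hB))
    have hA := hsat A List.mem_cons_self
    have hE : CDB.lub (Set.range e) ⟨A.pred, A.args.map (VTerm.subst σ)⟩ =
        .just (A.value.subst σ) := just_le hA
    obtain ⟨n2, hn2⟩ := hjust _ _ hE
    refine ⟨max N1 n2, ?_⟩
    intro B hB
    rcases List.mem_cons.1 hB with rfl | hB
    · have h3 := hmono n2 (max N1 n2) (le_max_right _ _) ⟨B.pred, B.args.map (VTerm.subst σ)⟩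
      rw [hn2] at h3
      rw [just_le h3]
      exact cle_refl _
    · exact satC_mono hN1 (hmono N1 (max N1 n2) (le_max_left _ _)) B hB

lemma sat_limit {P : Program} {e : ℕ → CDB} (he : ∀ n, e n ∈ It P n)
    (hcomp : Compatible (Set.range e)) :
    CDB.lub (Set.range e) ∈ TP P (CDB.lub (Set.range e)) := by
  have hub : ∀ n, e n ≤ CDB.lub (Set.range e) := fun n => cdb_lub_ub hcomp _ ⟨n, rfl⟩
  have hchain := chain_step he hub
  have hmono : ∀ m n, m ≤ n → e m ≤ e n :=
    chain_mono (fun n => mem_TP_le (hchain n))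
  have hjust : ∀ a t, CDB.lub (Set.range e) a = .just t → ∃ n, e n a = .just t := by
    intro a t h
    obtain ⟨d, ⟨n, rfl⟩, hd⟩ := cdb_lub_just h
    exact ⟨n, hd⟩
  refine mem_TP_self ?_
  intro C hC
  rcases Set.mem_insert_iff.1 hC with rfl | h
  · exact ⟨_, rfl, cdb_le_refl _⟩
  · obtain ⟨r, hr, σ, hsat, rfl⟩ := h
    obtain ⟨N, hN⟩ := sat_stage hmono hjust r.prems σ hsat
    obtain ⟨f, hf, hcompf, hEq⟩ := mem_TP_iff.1 (hchain N)
    have hidx : headChoice σ r.head ∈ HS P (e N) :=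
      Set.mem_insert_of_mem _ ⟨r, hr, σ, hN, rfl⟩
    refine ⟨f ⟨_, hidx⟩, hf ⟨_, hidx⟩, ?_⟩
    have h1 := cdb_lub_ub hcompf _ ⟨⟨_, hidx⟩, rfl⟩
    rw [← hEq] at h1
    exact cdb_le_trans h1 (hub (N + 1))

lemma ItJoin_choice {P : Program} : IsChoiceSet (ChoiceJoin (fun n : ℕ => It P n)) := by
  intro D hD E hE hcompat
  obtain ⟨d, hd, hcompd, rfl⟩ := hD
  obtain ⟨e', he', hcompe, rfl⟩ := hE
  obtain ⟨u, hDu, hEu⟩ := compat_ub hcompat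
  have heq : d = e' := by
    funext n
    refine It_choice n _ (hd n) _ (he' n) (compat_of_le (u := u) ?_ ?_)
    · exact cdb_le_trans (cdb_lub_ub hcompd _ ⟨n, rfl⟩) hDu
    · exact cdb_le_trans (cdb_lub_ub hcompe _ ⟨n, rfl⟩) hEu
  rw [heq]

lemma ItJoin_prefixed {P : Program} :
    ChoiceLE (TPs P (ChoiceJoin (fun n : ℕ => It P n))) (ChoiceJoin (fun n : ℕ => It P n)) := by
  intro D hD
  have hD' := hD
  obtain ⟨d, hd, hcompd, heq⟩ := hD'
  refine ⟨D, mem_TPs_iff.2 ⟨D, hD, ?_⟩, cdb_le_refl _⟩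
  rw [heq]
  exact sat_limit hd hcompd
lemma mem_erase_iff {Δ : CDB} {f : Fact} : f ∈ eraseCDB Δ ↔ Δ f.attr = .just f.value :=
  Iff.rfl

lemma erase_consistent (Δ : CDB) : Consistent (eraseCDB Δ) := by
  rintro ⟨fa, fv⟩ hf ⟨ga, gv⟩ hg hattr
  have hattr' : fa = ga := hattr
  subst hattr'
  have h1 : Constraint.just fv = .just gv :=
    (mem_erase_iff.1 hf).symm.trans (mem_erase_iff.1 hg)
  rw [Constraint.just.inj h1]

lemma consistent_mono {D E : Set Fact} (h : D ⊆ E) (hE : Consistent E) : Consistent D :=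
  fun f hf g hg => hE f (h hf) g (h hg)

lemma erase_mono {d e : CDB} (h : d ≤ e) : eraseCDB d ⊆ eraseCDB e := by
  intro f hf
  have h1 := h f.attr
  rw [mem_erase_iff.1 hf] at h1
  exact mem_erase_iff.2 (just_le h1)

lemma erase_bot : eraseCDB cdbBot = (∅ : Set Fact) := by
  ext f
  simp only [Set.mem_empty_iff_false, iff_false]
  intro hf
  cases mem_erase_iff.1 hf

lemma step_insert {P : Program} {d d' : CDB} (hd' : d' ∈ TP P d) {D : Set Fact}
    (hD1 : eraseCDB d ⊆ D) (hD2 : D ⊆ eraseCDB d') {g : Fact} (hg : g ∈ eraseCDB d')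
    (hgd : g ∉ eraseCDB d) : Step P D (insert g D) := by
  obtain ⟨ga, gv⟩ := g
  obtain ⟨f, hf, hcompf, hEq⟩ := mem_TP_iff.1 hd'
  have hga : d' ga = .just gv := mem_erase_iff.1 hg
  rw [hEq] at hga
  obtain ⟨x, hxmem, hx⟩ := cdb_lub_just hga
  obtain ⟨i, rfl⟩ := hxmem
  have hcons : Consistent (insert (⟨ga, gv⟩ : Fact) D) := by
    refine consistent_mono ?_ (erase_consistent d')
    intro y hy
    rcases Set.mem_insert_iff.1 hy with rfl | hy
    · exact hg
    · exact hD2 hy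
  rcases Set.mem_insert_iff.1 i.2 with hmem | hmem
  · have hfi : f i ∈ ({d} : Set CDB) := hmem ▸ hf i
    rw [Set.mem_singleton_iff.1 hfi] at hx
    exact absurd (mem_erase_iff.2 hx) hgd
  · obtain ⟨r, hr, σ, hsat, hEqC⟩ := hmem
    have hsatF : satF σ r.prems D := by
      intro A hA
      exact hD1 (mem_erase_iff.2 (just_le (hsat A hA)))
    cases hh : r.head with
    | opn p args v =>
      rw [hh] at hEqC
      have hfi : f i ∈ headChoice σ (.opn p args v) := hEqC ▸ hf i
      have hAg : ga = ⟨p, args.map (VTerm.subst σ)⟩ ∧ gv = v.subst σ := by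
        rcases Set.mem_insert_iff.1 hfi with e1 | e1
        · rw [e1] at hx
          by_cases hA : ga = ⟨p, args.map (VTerm.subst σ)⟩
          · rw [hA, unitCDB_self] at hx
            exact ⟨hA, (Constraint.just.inj hx).symm⟩
          · rw [unitCDB_ne hA] at hx; cases hx
        · rw [Set.mem_singleton_iff.1 e1] at hx
          by_cases hA : ga = ⟨p, args.map (VTerm.subst σ)⟩
          · rw [hA, unitCDB_self] at hx; cases hx
          · rw [unitCDB_ne hA] at hx; cases hx
      obtain ⟨rfl, rfl⟩ := hAg
      exact ⟨_, Evolve.opn hr hh hsatF, Or.inr ⟨rfl, hcons⟩⟩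
    | closed p args vs =>
      rw [hh] at hEqC
      have hfi : f i ∈ headChoice σ (.closed p args vs) := hEqC ▸ hf i
      obtain ⟨v, hv, e1⟩ := hfi
      have hAg : ga = ⟨p, args.map (VTerm.subst σ)⟩ ∧ gv = v.subst σ := by
        rw [e1] at hx
        by_cases hA : ga = ⟨p, args.map (VTerm.subst σ)⟩
        · rw [hA, unitCDB_self] at hx
          exact ⟨hA, (Constraint.just.inj hx).symm⟩
        · rw [unitCDB_ne hA] at hx; cases hx
      obtain ⟨rfl, rfl⟩ := hAg
      exact ⟨_, Evolve.closed hr hh hsatF, ⟨v, hv, rfl, hcons⟩⟩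

lemma reach_TP {P : Program} {d d' : CDB} (hd' : d' ∈ TP P d)
    (hfin : (eraseCDB d').Finite) :
    Relation.ReflTransGen (Step P) (eraseCDB d) (eraseCDB d') := by
  have hle := mem_TP_le hd'
  have hsub := erase_mono hle
  have hdiff : (eraseCDB d' \ eraseCDB d).Finite := hfin.subset Set.diff_subset
  have key : ∀ s : Finset Fact, ↑s ⊆ eraseCDB d' \ eraseCDB d →
      Relation.ReflTransGen (Step P) (eraseCDB d) (eraseCDB d ∪ ↑s) := by
    intro s
    induction s using Finset.induction_on with
    | empty =>
      intro _
      rw [Finset.coe_empty, Set.union_empty]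
    | insert a s hnew ih =>
      intro hsub'
      rw [Finset.coe_insert] at hsub' ⊢
      have hsubs : ↑s ⊆ eraseCDB d' \ eraseCDB d :=
        fun x hx => hsub' (Set.mem_insert_of_mem _ hx)
      have hamem : a ∈ eraseCDB d' \ eraseCDB d := hsub' (Set.mem_insert _ _)
      have hstep : Step P (eraseCDB d ∪ ↑s) (insert a (eraseCDB d ∪ ↑s)) := by
        refine step_insert hd' Set.subset_union_left ?_ hamem.1 hamem.2
        intro x hx
        rcases (Set.mem_union x _ _).1 hx with hx | hx
        · exact hsub hx
        · exact (hsubs hx).1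
      rw [Set.union_insert]
      exact (ih hsubs).tail hstep
  have hfinal : eraseCDB d' = eraseCDB d ∪ ↑hdiff.toFinset := by
    rw [Set.Finite.coe_toFinset]
    exact (Set.union_diff_cancel hsub).symm
  rw [hfinal]
  refine key _ ?_
  rw [Set.Finite.coe_toFinset]

/-- The set of choice-set lower bounds of the prefixed points of `T_P*`. -/
def LB (P : Program) : Set (Set CDB) :=
  { C | IsChoiceSet C ∧
    ∀ X ∈ { C | IsChoiceSet C ∧ ChoiceLE (TPs P C) C }, ChoiceLE C X }

lemma mem_lfp_iff {P : Program} {Δ : CDB} :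
    Δ ∈ lfpTPs P ↔ ∃ f : LB P → CDB, (∀ i : LB P, f i ∈ i.1) ∧
      Compatible (Set.range f) ∧ Δ = CDB.lub (Set.range f) := Iff.rfl
/-- Reachability of finite fixed points: any finite `Δ ∈ lfp T_P*` has a fact-set
step sequence from `∅` to its erasure. -/
theorem finite_fixed_points_reachable (P : Program) (hP : Program.WFP P) (Δ : CDB)
    (h₁ : Δ ∈ lfpTPs P) (h₂ : CDBFinite Δ) :
    Relation.ReflTransGen (Step P) ∅ (eraseCDB Δ) := by
  classical
  obtain ⟨F, hF, hcompF, hΔ⟩ := mem_lfp_iff.1 h₁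
  have hFle : ∀ i, F i ≤ Δ := by
    rw [hΔ]; exact fun i => cdb_lub_ub hcompF _ ⟨i, rfl⟩
  have hItLB : ∀ n, It P n ∈ LB P := fun n => ⟨It_choice n, fun X hX => It_lb hX.2 n⟩
  set d : ℕ → CDB := fun n => F ⟨It P n, hItLB n⟩ with hd
  have hdIt : ∀ n, d n ∈ It P n := fun n => hF ⟨It P n, hItLB n⟩
  have hdle : ∀ n, d n ≤ Δ := fun n => hFle _
  have hcompd : Compatible (Set.range d) :=
    compatible_def.2 ⟨Δ, by rintro x ⟨n, rfl⟩; exact hdle n⟩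
  have hΔωle : CDB.lub (Set.range d) ≤ Δ :=
    cdb_lub_le (by rintro x ⟨n, rfl⟩; exact hdle n)
  have hCω : ChoiceJoin (fun n : ℕ => It P n) ∈
      { C | IsChoiceSet C ∧ ChoiceLE (TPs P C) C } := ⟨ItJoin_choice, ItJoin_prefixed⟩
  have hΔωCω : CDB.lub (Set.range d) ∈ ChoiceJoin (fun n : ℕ => It P n) :=
    ⟨d, hdIt, hcompd, rfl⟩
  have hpick : ∀ i : LB P, F i ≤ CDB.lub (Set.range d) := by
    intro i
    obtain ⟨e, he, hele⟩ := i.2.2 _ hCω (CDB.lub (Set.range d)) hΔωCω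
    have heq : e = F i :=
      i.2.1 _ he _ (hF i) (compat_of_le (u := Δ) (cdb_le_trans hele hΔωle) (hFle i))
    exact heq ▸ hele
  have hΔeq : Δ = CDB.lub (Set.range d) := by
    refine cdb_le_antisymm ?_ hΔωle
    rw [hΔ]
    exact cdb_lub_le (by rintro x ⟨i, rfl⟩; exact hpick i)
  have hjust : ∀ a t, Δ a = .just t → ∃ n, d n a = .just t := by
    intro a t h
    rw [hΔeq] at h
    obtain ⟨x, hxm, hx⟩ := cdb_lub_just h
    obtain ⟨n, rfl⟩ := hxm
    exact ⟨n, hx⟩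
  have hchain : ∀ n, d (n + 1) ∈ TP P (d n) := chain_step hdIt hdle
  have hmono := chain_mono (fun n => mem_TP_le (hchain n))
  have hfinJ : (eraseCDB Δ).Finite := by
    have himg : Fact.attr '' eraseCDB Δ ⊆ { a | Δ a ≠ .noneOf ∅ } := by
      rintro a ⟨f, hf, rfl⟩
      intro hcon
      rw [mem_erase_iff.1 hf] at hcon
      cases hcon
    have hinj : Set.InjOn Fact.attr (eraseCDB Δ) := by
      rintro ⟨fa, fv⟩ hf ⟨ga, gv⟩ hg heq
      have heq' : fa = ga := heq
      subst heq'
      have h1 : Constraint.just fv = .just gv :=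
        (mem_erase_iff.1 hf).symm.trans (mem_erase_iff.1 hg)
      rw [Constraint.just.inj h1]
    exact Set.Finite.of_finite_image (h₂.1.subset himg) hinj
  have hsubn : ∀ n, eraseCDB (d n) ⊆ eraseCDB Δ := fun n => erase_mono (hdle n)
  have hex : ∀ f ∈ eraseCDB Δ, ∃ n, d n f.attr = .just f.value :=
    fun f hf => hjust _ _ (mem_erase_iff.1 hf)
  set nf : Fact → ℕ := fun f => if h : f ∈ eraseCDB Δ then (hex f h).choose else 0
    with hnf
  set N := hfinJ.toFinset.sup nf with hN
  have hJN : eraseCDB Δ = eraseCDB (d N) := by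
    refine Set.Subset.antisymm ?_ (hsubn N)
    intro f hf
    have h1 : d (nf f) f.attr = .just f.value := by
      rw [hnf]
      simp only [dif_pos hf]
      exact (hex f hf).choose_spec
    have h2 : nf f ≤ N := Finset.le_sup (hfinJ.mem_toFinset.2 hf)
    have h3 := hmono _ _ h2 f.attr
    rw [h1] at h3
    exact mem_erase_iff.2 (just_le h3)
  have hreach : ∀ n, Relation.ReflTransGen (Step P) ∅ (eraseCDB (d n)) := by
    intro n
    induction n with
    | zero =>
      have h0 : d 0 = cdbBot := Set.mem_singleton_iff.1 (hdIt 0)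
      rw [h0, erase_bot]
    | succ n ih =>
      exact ih.trans (reach_TP (hchain n) (hfinJ.subset (hsubn (n + 1))))
  rw [hJN]
  exact hreach N

end FCLP
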